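/- Let n ≥ 2 and λ = (k, 1^{n-k}) be a hook partition of n. Then for 0 ≤ i ≤ ⌊n/2⌋, Σ_{j=0}^{i} χ_λ(j) · C(i,j) = C(n-i-1, k-i-1) · 2^i, where χ_λ(j) is the value of the irreducible character χ_λ of S_n on a permutation of cycle type 2^j 1^{n-2j}. -/

import Mathlib

open Finset

/-- Irreducible character of `Sₙ` indexed by the partition `lam`, via the
Frobenius character formula. -/
noncomputable def chiPart (n : ℕ) (lam : Fin n → ℕ) (σ : Equiv.Perm (Fin n)) : ℤ :=
  MvPolynomial.coeff (Finsupp.equivFunOnFinite.symm fun i => lam i + (n - 1 - (i : ℕ)))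
    ((∏ i : Fin n, ∏ j ∈ Finset.univ.filter (fun j => i < j),
        (MvPolynomial.X i - MvPolynomial.X j : MvPolynomial (Fin n) ℤ)) *
      ((σ.cycleType.map fun c =>
          ∑ i : Fin n, (MvPolynomial.X i : MvPolynomial (Fin n) ℤ) ^ c).prod *
        (∑ i : Fin n, (MvPolynomial.X i : MvPolynomial (Fin n) ℤ)) ^ (n - σ.cycleType.sum)))

/-- The hook partition `(k, 1^(n-k))` of `n`. -/
def hookPart (n k : ℕ) : Fin n → ℕ :=
  fun i => if (i : ℕ) = 0 then k else if (i : ℕ) ≤ n - k then 1 else 0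

open MvPolynomial

namespace ChiHook

variable (n : ℕ)

noncomputable def P (m : ℕ) : MvPolynomial (Fin n) ℤ := ∑ i : Fin n, (X i) ^ m

noncomputable def Del : MvPolynomial (Fin n) ℤ :=
  ∏ i : Fin n, ∏ j ∈ Finset.univ.filter (fun j => i < j), (X i - X j)

noncomputable def fsupp (v : Fin n → ℕ) : Fin n →₀ ℕ := Finsupp.equivFunOnFinite.symm v

variable {n}

@[simp] lemma fsupp_apply (v : Fin n → ℕ) (s : Fin n) : fsupp n v s = v s := rfl

lemma Del_eq_det : Del n = (-1)^(∑ i : Fin n, (Finset.Ioi i).card) * (Matrix.vandermonde (fun i : Fin n => (X i : MvPolynomial (Fin n) ℤ))).det := by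
  rw [Matrix.det_vandermonde, Del]
  rw [← Finset.prod_pow_eq_pow_sum, ← Finset.prod_mul_distrib]
  refine Finset.prod_congr rfl fun i _ => ?_
  rw [← Finset.prod_const, ← Finset.prod_mul_distrib]
  refine Finset.prod_congr ?_ fun j _ => by ring
  ext j; simp [Finset.mem_Ioi]

lemma rename_Del (e : Equiv.Perm (Fin n)) :
    rename (e : Fin n → Fin n) (Del n) = (Equiv.Perm.sign e : ℤ) * Del n := by
  have h1 : rename (e : Fin n → Fin n) ((Matrix.vandermonde (fun i : Fin n => (X i : MvPolynomial (Fin n) ℤ))).det)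
      = (Equiv.Perm.sign e : ℤ) * (Matrix.vandermonde (fun i : Fin n => (X i : MvPolynomial (Fin n) ℤ))).det := by
    have := RingHom.map_det (rename (e : Fin n → Fin n)).toRingHom
      (Matrix.vandermonde (fun i : Fin n => (X i : MvPolynomial (Fin n) ℤ)))
    have h2 : (Matrix.vandermonde (fun i : Fin n => (X i : MvPolynomial (Fin n) ℤ))).map
        (rename (e : Fin n → Fin n)).toRingHom
        = ((Matrix.vandermonde (fun i : Fin n => (X i : MvPolynomial (Fin n) ℤ)))).submatrix e id := by
      ext i j
      simp [Matrix.vandermonde, Matrix.map_apply]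
    rw [RingHom.mapMatrix_apply] at this
    rw [h2] at this
    rw [show ((rename (e : Fin n → Fin n)).toRingHom : MvPolynomial (Fin n) ℤ →+* MvPolynomial (Fin n) ℤ) ((Matrix.vandermonde (fun i : Fin n => (X i : MvPolynomial (Fin n) ℤ))).det) = rename (e : Fin n → Fin n) ((Matrix.vandermonde (fun i : Fin n => (X i : MvPolynomial (Fin n) ℤ))).det) from rfl] at this
    rw [this, Matrix.det_permute]
  rw [Del_eq_det, map_mul, map_pow, map_neg, map_one, h1]
  ring

lemma rename_P (e : Equiv.Perm (Fin n)) (m : ℕ) :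
    rename (e : Fin n → Fin n) (P n m) = P n m := by
  rw [P, map_sum]
  rw [← Equiv.sum_comp e (fun i => (X i : MvPolynomial (Fin n) ℤ) ^ m)]
  simp

end ChiHook

namespace ChiHook
variable {n : ℕ}

lemma coeff_rename_perm (e : Equiv.Perm (Fin n)) (g : MvPolynomial (Fin n) ℤ) (v : Fin n → ℕ) :
    coeff (fsupp n v) (rename (e : Fin n → Fin n) g) = coeff (fsupp n (v ∘ e)) g := by
  rw [← coeff_rename_mapDomain (e : Fin n → Fin n) e.injective g (fsupp n (v ∘ e))]
  congr 1
  ext x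
  rw [Finsupp.mapDomain_equiv_apply]
  simp

noncomputable def Q (n a b : ℕ) : MvPolynomial (Fin n) ℤ := Del n * P n 1 ^ a * P n 2 ^ b

lemma coeff_swap (a b : ℕ) (v : Fin n → ℕ) {x y : Fin n} (hxy : x ≠ y) :
    coeff (fsupp n (v ∘ (Equiv.swap x y : Equiv.Perm (Fin n)))) (Q n a b)
      = - coeff (fsupp n v) (Q n a b) := by
  rw [← coeff_rename_perm (Equiv.swap x y) (Q n a b) v]
  have : rename ((Equiv.swap x y : Equiv.Perm (Fin n)) : Fin n → Fin n) (Q n a b) = - Q n a b := by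
    rw [Q, map_mul, map_mul, map_pow, map_pow, rename_Del, rename_P, rename_P,
      Equiv.Perm.sign_swap hxy]
    push_cast
    ring
  rw [this, coeff_neg]

lemma coeff_collision (a b : ℕ) (v : Fin n → ℕ) {x y : Fin n} (hxy : x ≠ y) (hv : v x = v y) :
    coeff (fsupp n v) (Q n a b) = 0 := by
  have h := coeff_swap a b v hxy
  have hveq : v ∘ (Equiv.swap x y : Equiv.Perm (Fin n)) = v := by
    funext z
    rcases eq_or_ne z x with rfl | hzx
    · simp [Equiv.swap_apply_left, hv]
    rcases eq_or_ne z y with rfl | hzy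
    · simp [Equiv.swap_apply_right, hv]
    · simp [Equiv.swap_apply_of_ne_of_ne hzx hzy]
  rw [hveq] at h
  omega

lemma fsupp_sub_single (v : Fin n → ℕ) (s : Fin n) (m : ℕ) :
    fsupp n v - Finsupp.single s m = fsupp n (Function.update v s (v s - m)) := by
  ext x
  rw [Finsupp.tsub_apply]
  rcases eq_or_ne x s with rfl | hxs
  · simp [Function.update]
  · simp [Finsupp.single_apply, Ne.symm hxs, Function.update, hxs]

lemma coeff_mul_X_fn (v : Fin n → ℕ) (s : Fin n) (q : MvPolynomial (Fin n) ℤ) :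
    coeff (fsupp n v) (q * X s)
      = if 1 ≤ v s then coeff (fsupp n (Function.update v s (v s - 1))) q else 0 := by
  rw [coeff_mul_X']
  have : s ∈ (fsupp n v).support ↔ 1 ≤ v s := by
    rw [Finsupp.mem_support_iff]; simp; omega
  split_ifs with h1 h2 h3
  · rw [fsupp_sub_single]
  · exact absurd (this.1 h1) h2
  · exact absurd (this.2 h3) h1
  · rfl

lemma coeff_mul_P1 (v : Fin n → ℕ) (q : MvPolynomial (Fin n) ℤ) :
    coeff (fsupp n v) (q * P n 1)
      = ∑ t : Fin n, if 1 ≤ v t then coeff (fsupp n (Function.update v t (v t - 1))) q else 0 := by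
  rw [P, Finset.mul_sum]
  rw [MvPolynomial.coeff_sum]
  refine Finset.sum_congr rfl fun t _ => ?_
  rw [pow_one, coeff_mul_X_fn]

lemma coeff_mul_P2 (v : Fin n → ℕ) (q : MvPolynomial (Fin n) ℤ) :
    coeff (fsupp n v) (q * P n 2)
      = ∑ t : Fin n, if 2 ≤ v t then coeff (fsupp n (Function.update v t (v t - 2))) q else 0 := by
  rw [P, Finset.mul_sum]
  rw [MvPolynomial.coeff_sum]
  refine Finset.sum_congr rfl fun t _ => ?_
  rw [sq, ← mul_assoc, coeff_mul_X_fn]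
  by_cases h2 : 2 ≤ v t
  · have h1 : 1 ≤ v t := by omega
    rw [if_pos h1, coeff_mul_X_fn, Function.update_idem, Function.update_self,
      if_pos (show 1 ≤ v t - 1 by omega), if_pos h2,
      show v t - 1 - 1 = v t - 2 by omega]
  · rw [if_neg h2]
    by_cases h1 : 1 ≤ v t
    · rw [if_pos h1, coeff_mul_X_fn, Function.update_self, if_neg (by omega)]
    · rw [if_neg h1]

end ChiHook

namespace ChiHook
variable {n : ℕ}

noncomputable def DS (S : Finset (Fin n)) : MvPolynomial (Fin n) ℤ :=
  ∏ i ∈ S, ∏ j ∈ S.filter (fun j => i < j), (X i - X j)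

def delS (S : Finset (Fin n)) : Fin n → ℕ :=
  fun x => if x ∈ S then (S.filter (fun j => x < j)).card else 0

lemma vars_DS {S : Finset (Fin n)} : (DS S).vars ⊆ S := by
  refine (MvPolynomial.vars_prod _).trans ?_
  intro x hx
  simp only [Finset.mem_biUnion] at hx
  obtain ⟨i, hi, hx⟩ := hx
  have hx2 := (MvPolynomial.vars_prod _) hx
  simp only [Finset.mem_biUnion] at hx2
  obtain ⟨j, hj, hx3⟩ := hx2
  have := MvPolynomial.vars_sub_subset (p := (X i : MvPolynomial (Fin n) ℤ)) (q := X j) hx3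
  rw [MvPolynomial.vars_X, MvPolynomial.vars_X] at this
  simp only [Finset.mem_union, Finset.mem_singleton] at this
  rcases this with rfl | rfl
  · exact hi
  · exact (Finset.mem_filter.1 hj).1

lemma coeff_DS_zero {S : Finset (Fin n)} {m : Fin n} (hm : m ∉ S) {w : Fin n →₀ ℕ}
    (hw : coeff w (DS S) ≠ 0) : w m = 0 := by
  by_contra h
  have hmw : m ∈ w.support := Finsupp.mem_support_iff.2 h
  have : m ∈ (DS S).vars := (MvPolynomial.mem_vars m).2 ⟨w, MvPolynomial.mem_support_iff.2 hw, hmw⟩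
  exact hm (vars_DS this)

lemma coeff_linfactors (T : Finset (Fin n)) (m : Fin n) (hm : m ∉ T) :
    ∀ u : Fin n →₀ ℕ, T.card ≤ u m →
      coeff u (∏ j ∈ T, ((X m : MvPolynomial (Fin n) ℤ) - X j))
        = if u = Finsupp.single m T.card then 1 else 0 := by
  induction T using Finset.induction_on with
  | empty =>
    intro u _
    simp only [Finset.prod_empty, Finset.card_empty, Finsupp.single_zero]
    rw [MvPolynomial.coeff_one]
    by_cases h : u = 0 <;> simp [h, eq_comm]
  | @insert j T hj ih =>
    intro u hu
    have hmT : m ∉ T := fun h => hm (Finset.mem_insert_of_mem h)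
    have hmj : m ≠ j := fun h => hm (h ▸ Finset.mem_insert_self j T)
    rw [Finset.card_insert_of_notMem hj] at hu ⊢
    rw [Finset.prod_insert hj, sub_mul, coeff_sub, coeff_X_mul', coeff_X_mul']
    have hms : m ∈ u.support := Finsupp.mem_support_iff.2 (by omega)
    rw [if_pos hms]
    have h1 : ((u - Finsupp.single m 1 : Fin n →₀ ℕ)) m = u m - 1 := by
      rw [Finsupp.tsub_apply, Finsupp.single_eq_same]
    have ihm := ih hmT (u - Finsupp.single m 1) (by omega)
    rw [ihm]
    have hterm2 : (if j ∈ u.support then coeff (u - Finsupp.single j 1)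
        (∏ j ∈ T, ((X m : MvPolynomial (Fin n) ℤ) - X j)) else 0) = 0 := by
      split_ifs with hjs
      · have h2 : ((u - Finsupp.single j 1 : Fin n →₀ ℕ)) m = u m := by
          rw [Finsupp.tsub_apply, Finsupp.single_apply, if_neg (Ne.symm hmj)]; omega
        rw [ih hmT _ (by omega)]
        rw [if_neg]
        intro hcon
        have := congrArg (fun f => f m) hcon
        simp only [Finsupp.single_eq_same] at this
        omega
      · rfl
    rw [hterm2, sub_zero]
    have hiff : (u - Finsupp.single m 1 = Finsupp.single m T.card) ↔ (u = Finsupp.single m (T.card + 1)) := by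
      constructor
      · intro h
        ext x
        have hx := congrArg (fun f : Fin n →₀ ℕ => f x) h
        simp only [Finsupp.tsub_apply] at hx
        rcases eq_or_ne m x with rfl | hmx
        · simp only [Finsupp.single_eq_same] at hx ⊢; omega
        · simp only [Finsupp.single_eq_of_ne hmx.symm] at hx ⊢; omega
      · intro h
        subst h
        ext x
        simp only [Finsupp.tsub_apply, Finsupp.single_apply]
        rcases eq_or_ne m x with rfl | hmx
        · simp
        · simp [hmx]
    by_cases hcase : u = Finsupp.single m (T.card + 1)
    · rw [if_pos (hiff.2 hcase), if_pos hcase]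
    · rw [if_neg (fun h => hcase (hiff.1 h)), if_neg hcase]

end ChiHook

namespace ChiHook
variable {n : ℕ}

lemma coeff_DS (S : Finset (Fin n)) : coeff (fsupp n (delS S)) (DS S) = 1 := by
  induction S using Finset.strongInductionOn with
  | _ S ih =>
  rcases S.eq_empty_or_nonempty with rfl | hS
  · have h0 : fsupp n (delS (∅ : Finset (Fin n))) = 0 := by
      ext x; simp [delS]
    rw [h0, DS, Finset.prod_empty, MvPolynomial.coeff_one, if_pos rfl]
  · set m := S.min' hS with hm
    have hmS : m ∈ S := S.min'_mem hS
    set T := S.filter (fun j => m < j) with hT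
    have hmT : m ∉ T := by simp [hT]
    have hTerase : T = S.erase m := by
      ext y
      simp only [hT, Finset.mem_filter, Finset.mem_erase]
      constructor
      · rintro ⟨hy, hlt⟩; exact ⟨ne_of_gt hlt, hy⟩
      · rintro ⟨hne, hy⟩; exact ⟨hy, lt_of_le_of_ne (S.min'_le y hy) (Ne.symm hne)⟩
    have hsplit : DS S = (∏ j ∈ T, ((X m : MvPolynomial (Fin n) ℤ) - X j)) * DS (S.erase m) := by
      rw [DS, ← Finset.mul_prod_erase _ _ hmS]
      congr 1
      rw [DS]
      refine Finset.prod_congr rfl fun i hi => ?_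
      refine Finset.prod_congr ?_ fun _ _ => rfl
      ext y
      simp only [Finset.mem_filter, Finset.mem_erase]
      constructor
      · rintro ⟨hy, hlt⟩
        refine ⟨⟨?_, hy⟩, hlt⟩
        rintro rfl
        exact absurd hlt (not_lt.2 (S.min'_le i (Finset.mem_erase.1 hi).2))
      · rintro ⟨⟨_, hy⟩, hlt⟩; exact ⟨hy, hlt⟩
    have hsub : S.erase m ⊂ S := Finset.erase_ssubset hmS
    have ihe := ih _ hsub
    -- the distinguished splitting pair
    have hpair : (Finsupp.single m T.card, fsupp n (delS (S.erase m)))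
        ∈ Finset.HasAntidiagonal.antidiagonal (fsupp n (delS S)) := by
      rw [Finset.HasAntidiagonal.mem_antidiagonal]
      ext x
      simp only [Finsupp.add_apply, fsupp_apply, Finsupp.single_apply, delS]
      rcases eq_or_ne m x with rfl | hmx
      · simp [Finset.erase_eq_of_notMem, hmS, hT]
      · rw [if_neg hmx]
        by_cases hxS : x ∈ S
        · have hxe : x ∈ S.erase m := Finset.mem_erase.2 ⟨Ne.symm hmx, hxS⟩
          rw [if_pos hxS, if_pos hxe]
          have : (S.erase m).filter (fun j => x < j) = S.filter (fun j => x < j) := by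
            ext y
            simp only [Finset.mem_filter, Finset.mem_erase]
            constructor
            · rintro ⟨⟨_, hy⟩, hlt⟩; exact ⟨hy, hlt⟩
            · rintro ⟨hy, hlt⟩
              refine ⟨⟨?_, hy⟩, hlt⟩
              rintro rfl
              have := S.min'_le x hxS
              exact absurd (this.trans_lt hlt) (lt_irrefl _)
          rw [this]; omega
        · have : x ∉ S.erase m := fun h => hxS (Finset.mem_erase.1 h).2
          rw [if_neg hxS, if_neg this]
    rw [hsplit, MvPolynomial.coeff_mul]
    rw [Finset.sum_eq_single_of_mem _ hpair]
    · rw [ihe, coeff_linfactors T m hmT _ (by simp [Finsupp.single_eq_same]), if_pos rfl, one_mul]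
    · rintro ⟨u, w⟩ hmem hne
      rw [Finset.HasAntidiagonal.mem_antidiagonal] at hmem
      by_cases hw : coeff w (DS (S.erase m)) = 0
      · rw [hw, mul_zero]
      · have hwm : w m = 0 := coeff_DS_zero (Finset.notMem_erase m S) hw
        have hum : u m = T.card := by
          have := congrArg (fun f : Fin n →₀ ℕ => f m) hmem
          simp only [Finsupp.add_apply, fsupp_apply] at this
          simp only [delS, if_pos hmS] at this
          rw [← hT] at this
          omega
        rw [coeff_linfactors T m hmT u (le_of_eq hum.symm)]
        rw [if_neg, zero_mul]
        intro hu
        apply hne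
        have hpe := Finset.HasAntidiagonal.mem_antidiagonal.1 hpair
        rw [hu] at hmem
        have hwdet : w = fsupp n (delS (S.erase m)) := add_left_cancel (hmem.trans hpe.symm)
        rw [hu, hwdet]

end ChiHook

namespace ChiHook
variable {n : ℕ}

def vec (n k r : ℕ) : Fin n → ℕ :=
  fun p => if (p : ℕ) = 0 then k + (n - 1) else if (p : ℕ) ≤ r then n - p else n - 1 - p

lemma coeff_Del_base (hn : 1 ≤ n) : coeff (fsupp n (vec n 0 0)) (Del n) = 1 := by
  have h1 : (Del n) = DS (Finset.univ : Finset (Fin n)) := by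
    rw [Del, DS]
  have h2 : vec n 0 0 = delS (Finset.univ : Finset (Fin n)) := by
    funext x
    simp only [vec, delS, if_pos (Finset.mem_univ x)]
    have : Finset.univ.filter (fun j => x < j) = Finset.Ioi x := by
      ext y; simp [Finset.mem_Ioi]
    rw [this, Fin.card_Ioi]
    rcases Nat.eq_zero_or_pos (x : ℕ) with h | h
    · rw [if_pos h, h, zero_add]; omega
    · rw [if_neg (by omega), if_neg (by omega)]
  rw [h1, h2, coeff_DS]

noncomputable def cpol (a b : ℕ) : Polynomial ℤ :=
  (1 - Polynomial.X) ^ b * (1 + Polynomial.X) ^ (a + b - 1)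

noncomputable def cc (r a b : ℕ) : ℤ := (cpol a b).coeff r

lemma cc_zero (a b : ℕ) : cc 0 a b = 1 := by
  simp [cc, cpol, Polynomial.coeff_zero_eq_eval_zero]

lemma cc_vanish {r a b : ℕ} (hab : 1 ≤ a + b) (hr : a + 2 * b ≤ r) : cc r a b = 0 := by
  apply Polynomial.coeff_eq_zero_of_natDegree_lt
  calc (cpol a b).natDegree ≤ ((1 - Polynomial.X : Polynomial ℤ) ^ b).natDegree
        + ((1 + Polynomial.X : Polynomial ℤ) ^ (a + b - 1)).natDegree := Polynomial.natDegree_mul_le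
    _ ≤ b * 1 + (a + b - 1) * 1 := by
        gcongr ?_ + ?_
        · exact (Polynomial.natDegree_pow_le).trans (by
            gcongr
            exact (Polynomial.natDegree_sub_le _ _).trans (by simp))
        · exact (Polynomial.natDegree_pow_le).trans (by
            gcongr
            exact (Polynomial.natDegree_add_le _ _).trans (by simp))
    _ < r := by omega

lemma cpol_succ_a (a b : ℕ) (hab : 1 ≤ a + b) :
    cpol (a + 1) b = cpol a b + cpol a b * Polynomial.X := by
  rw [cpol, cpol, show a + 1 + b - 1 = (a + b - 1) + 1 by omega, pow_succ]
  ring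

lemma cc_succ_a {r a b : ℕ} (hr : 1 ≤ r) (hab : 1 ≤ a + b) :
    cc r (a + 1) b = cc r a b + cc (r - 1) a b := by
  rw [cc, cpol_succ_a a b hab, Polynomial.coeff_add, cc, cc]
  congr 1
  obtain ⟨r', rfl⟩ : ∃ r', r = r' + 1 := ⟨r - 1, by omega⟩
  simp [Polynomial.coeff_mul_X]

lemma cpol_succ_b (a b : ℕ) (hab : 1 ≤ a + b) :
    cpol a (b + 1) = cpol a b - cpol a b * Polynomial.X ^ 2 := by
  rw [cpol, cpol, show a + (b + 1) - 1 = (a + b - 1) + 1 by omega, pow_succ, pow_succ]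
  ring

lemma cc_succ_b {r a b : ℕ} (hr : 2 ≤ r) (hab : 1 ≤ a + b) :
    cc r a (b + 1) = cc r a b - cc (r - 2) a b := by
  rw [cc, cpol_succ_b a b hab, Polynomial.coeff_sub, cc, cc]
  congr 1
  rw [Polynomial.coeff_mul_X_pow', if_pos (by omega)]

lemma cc_one_b {a b : ℕ} (hab : 1 ≤ a + b) : cc 1 a (b + 1) = cc 1 a b := by
  rw [cc, cpol_succ_b a b hab, Polynomial.coeff_sub, cc,
    Polynomial.coeff_mul_X_pow', if_neg (by omega), sub_zero]

lemma cc_101 : cc 1 0 1 = -1 := by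
  rw [cc, cpol]
  norm_num [Polynomial.coeff_one]

lemma cc_111 : cc 1 1 1 = 0 := by
  rw [cc, cpol]
  have : (1 - Polynomial.X : Polynomial ℤ) ^ 1 * (1 + Polynomial.X) ^ (1 + 1 - 1)
      = 1 - Polynomial.X ^ 2 := by ring
  rw [this, Polynomial.coeff_sub, Polynomial.coeff_one, Polynomial.coeff_X_pow]
  norm_num

end ChiHook

namespace ChiHook
variable {n : ℕ}

lemma vec_val (k r : ℕ) (x : Fin n) : vec n k r x
    = if (x:ℕ) = 0 then k + (n-1) else if (x:ℕ) ≤ r then n - x else n - 1 - x := rfl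

lemma fin_ne_of_val_ne {x y : Fin n} (h : (x:ℕ) ≠ (y:ℕ)) : x ≠ y :=
  fun he => h (congrArg Fin.val he)

lemma update_vec (k r k' r' : ℕ) (t : Fin n) (w : ℕ)
    (ht : ∀ (xv : ℕ) (hxv : xv < n),
      (if xv = (t:ℕ) then w else vec n k r ⟨xv, hxv⟩) = vec n k' r' ⟨xv, hxv⟩) :
    Function.update (vec n k r) t w = vec n k' r' := by
  funext x
  have hx := ht x.val x.isLt
  rcases eq_or_ne x t with rfl | hne
  · rw [Function.update_self]
    rw [if_pos rfl] at hx
    simpa using hx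
  · rw [Function.update_of_ne hne]
    rw [if_neg (fun h => hne (Fin.ext h))] at hx
    simpa using hx

lemma coll_helper (a b : ℕ) (v : Fin n → ℕ) (t y : Fin n) (w : ℕ) (hne : t ≠ y)
    (hw : w = v y) :
    coeff (fsupp n (Function.update v t w)) (Q n a b) = 0 := by
  refine coeff_collision a b _ (x := t) (y := y) hne ?_
  rw [Function.update_self, Function.update_of_ne (Ne.symm hne), hw]

lemma update_eq_comp_swap (v vb : Fin n → ℕ) (t y : Fin n) (w : ℕ) (hne : t ≠ y)
    (h1 : w = vb y) (h2 : v y = vb t) (h3 : ∀ x : Fin n, x ≠ t → x ≠ y → v x = vb x) :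
    Function.update v t w = vb ∘ (Equiv.swap t y : Equiv.Perm (Fin n)) := by
  funext x
  rcases eq_or_ne x t with rfl | hxt
  · simp only [Function.update_self, Function.comp_apply, Equiv.swap_apply_left]
    exact h1
  rcases eq_or_ne x y with rfl | hxy
  · rw [Function.update_of_ne hxt]
    simp only [Function.comp_apply, Equiv.swap_apply_right]
    exact h2
  · rw [Function.update_of_ne hxt]
    simp only [Function.comp_apply, Equiv.swap_apply_of_ne_of_ne hxt hxy]
    exact h3 x hxt hxy

lemma swap_helper (a b : ℕ) (v : Fin n → ℕ) (vb : Fin n → ℕ) (t y : Fin n) (w : ℕ)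
    (hne : t ≠ y) (h1 : w = vb y) (h2 : v y = vb t)
    (h3 : ∀ x : Fin n, x ≠ t → x ≠ y → v x = vb x) :
    coeff (fsupp n (Function.update v t w)) (Q n a b) = - coeff (fsupp n vb) (Q n a b) := by
  rw [update_eq_comp_swap v vb t y w hne h1 h2 h3]
  exact coeff_swap a b vb hne

lemma stepP1 (hn : 2 ≤ n) {a b k r : ℕ} (hk : 1 ≤ k) (hr : r ≤ n - 1)
    (h1 : k + r = (a+1) + 2*b)
    (H : ∀ k' r', k' + r' = a + 2*b → r' ≤ n-1 → (k' = 0 → r' = 0) →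
        coeff (fsupp n (vec n k' r')) (Q n a b) = cc r' a b) :
    coeff (fsupp n (vec n k r)) ((Q n a b) * P n 1) = cc r (a+1) b := by
  rw [coeff_mul_P1]
  have t0lt : (0:ℕ) < n := by omega
  set t0 : Fin n := ⟨0, t0lt⟩ with ht0
  have ht0v : (t0:ℕ) = 0 := rfl
  have hval0 : vec n k r t0 = k + (n-1) := by rw [vec_val, if_pos ht0v]
  rcases Nat.eq_zero_or_pos r with rfl | hrpos
  · -- r = 0 : single branch at t0
    have hsum : ∀ t : Fin n, (if 1 ≤ vec n k 0 t then
          coeff (fsupp n (Function.update (vec n k 0) t (vec n k 0 t - 1))) (Q n a b) else 0)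
        = (if t = t0 then coeff (fsupp n (vec n (k-1) 0)) (Q n a b) else 0) := by
      intro t
      rcases eq_or_ne t t0 with rfl | htne
      · rw [if_pos rfl, if_pos (by rw [hval0]; omega), hval0]
        congr 2
        apply update_vec
        intro xv hxv
        simp only [vec_val, ht0v, Fin.val_mk]
        split_ifs <;> (try contradiction) <;> omega
      · rw [if_neg htne]
        have htv : (t:ℕ) ≠ 0 := fun h => htne (Fin.ext h)
        have hval : vec n k 0 t = n - 1 - (t:ℕ) := by
          rw [vec_val, if_neg htv, if_neg (by omega)]
        by_cases hbig : (t:ℕ) ≤ n - 2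
        · rw [if_pos (by rw [hval]; omega), hval]
          have hy : ((t:ℕ)+1) < n := by omega
          refine coll_helper a b _ t ⟨(t:ℕ)+1, hy⟩ _
            (fin_ne_of_val_ne (by simp only [Fin.val_mk]; omega)) ?_
          simp only [vec_val, Fin.val_mk]
          split_ifs <;> (try contradiction) <;> omega
        · rw [if_neg (by rw [hval]; omega)]
    rw [Finset.sum_congr rfl (fun t _ => hsum t), Finset.sum_ite_eq' Finset.univ t0,
      if_pos (Finset.mem_univ _)]
    rw [H (k-1) 0 (by omega) (by omega) (by omega), cc_zero, cc_zero]
  · -- r ≥ 1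
    have ht1lt : r < n := by omega
    set t1 : Fin n := ⟨r, ht1lt⟩ with ht1
    have ht1v : (t1:ℕ) = r := rfl
    have ht01 : t0 ≠ t1 := fin_ne_of_val_ne (by rw [ht0v, ht1v]; omega)
    set T0 : ℤ := if 2 ≤ k then coeff (fsupp n (vec n (k-1) r)) (Q n a b) else 0 with hT0
    set T1 : ℤ := coeff (fsupp n (vec n k (r-1))) (Q n a b) with hT1
    have hsum : ∀ t : Fin n, (if 1 ≤ vec n k r t then
          coeff (fsupp n (Function.update (vec n k r) t (vec n k r t - 1))) (Q n a b) else 0)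
        = (if t = t0 then T0 else 0) + (if t = t1 then T1 else 0) := by
      intro t
      rcases eq_or_ne t t0 with rfl | htne0
      · rw [if_pos rfl, if_neg ht01, add_zero, if_pos (by rw [hval0]; omega), hval0, hT0]
        by_cases hk2 : 2 ≤ k
        · rw [if_pos hk2]
          congr 2
          apply update_vec
          intro xv hxv
          simp only [vec_val, ht0v, Fin.val_mk]
          split_ifs <;> (try contradiction) <;> omega
        · -- k = 1 : collision at positions 0 and 1
          rw [if_neg hk2]
          have h1lt : (1:ℕ) < n := by omega
          refine coll_helper a b _ t0 ⟨1, h1lt⟩ _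
            (fin_ne_of_val_ne (by rw [ht0v]; simp only [Fin.val_mk]; omega)) ?_
          simp only [vec_val, Fin.val_mk]
          split_ifs <;> (try contradiction) <;> omega
      rcases eq_or_ne t t1 with rfl | htne1
      · rw [if_neg htne0, if_pos rfl, zero_add]
        have hval : vec n k r t1 = n - r := by
          rw [vec_val, ht1v, if_neg (by omega), if_pos le_rfl]
        rw [if_pos (by rw [hval]; omega), hval, hT1]
        congr 2
        apply update_vec
        intro xv hxv
        simp only [vec_val, ht1v, Fin.val_mk]
        split_ifs <;> (try contradiction) <;> omega
      · -- other positions: zero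
        rw [if_neg htne0, if_neg htne1, add_zero]
        have htv : (t:ℕ) ≠ 0 := fun h => htne0 (Fin.ext h)
        have htvr : (t:ℕ) ≠ r := fun h => htne1 (Fin.ext h)
        by_cases hmid : (t:ℕ) ≤ r - 1
        · have hval : vec n k r t = n - (t:ℕ) := by
            rw [vec_val, if_neg htv, if_pos (by omega)]
          rw [if_pos (by rw [hval]; omega), hval]
          have hy : ((t:ℕ)+1) < n := by omega
          refine coll_helper a b _ t ⟨(t:ℕ)+1, hy⟩ _
            (fin_ne_of_val_ne (by simp only [Fin.val_mk]; omega)) ?_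
          simp only [vec_val, Fin.val_mk]
          split_ifs <;> (try contradiction) <;> omega
        · have hval : vec n k r t = n - 1 - (t:ℕ) := by
            rw [vec_val, if_neg htv, if_neg (by omega)]
          by_cases hbig : (t:ℕ) ≤ n - 2
          · rw [if_pos (by rw [hval]; omega), hval]
            have hy : ((t:ℕ)+1) < n := by omega
            refine coll_helper a b _ t ⟨(t:ℕ)+1, hy⟩ _
              (fin_ne_of_val_ne (by simp only [Fin.val_mk]; omega)) ?_
            simp only [vec_val, Fin.val_mk]
            split_ifs <;> (try contradiction) <;> omega
          · rw [if_neg (by rw [hval]; omega)]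
    rw [Finset.sum_congr rfl (fun t _ => hsum t), Finset.sum_add_distrib,
      Finset.sum_ite_eq' Finset.univ t0, Finset.sum_ite_eq' Finset.univ t1,
      if_pos (Finset.mem_univ _), if_pos (Finset.mem_univ _)]
    conv_rhs => rw [cc_succ_a hrpos (by omega)]
    by_cases hk2 : 2 ≤ k
    · rw [hT0, if_pos hk2, hT1,
        H (k-1) r (by omega) hr (by omega), H k (r-1) (by omega) (by omega) (by omega)]
    · rw [hT0, if_neg hk2, hT1, H k (r-1) (by omega) (by omega) (by omega),
        cc_vanish (show 1 ≤ a + b by omega) (show a + 2*b ≤ r by omega), zero_add]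

end ChiHook

namespace ChiHook
variable {n : ℕ}

lemma stepP2 (hn : 2 ≤ n) {a b k r : ℕ} (hk : 1 ≤ k) (hr : r ≤ n - 1)
    (h1 : k + r = a + 2*(b+1))
    (H : ∀ k' r', k' + r' = a + 2*b → r' ≤ n-1 → (k' = 0 → r' = 0) →
        coeff (fsupp n (vec n k' r')) (Q n a b) = cc r' a b) :
    coeff (fsupp n (vec n k r)) ((Q n a b) * P n 2) = cc r a (b+1) := by
  rw [coeff_mul_P2]
  have t0lt : (0:ℕ) < n := by omega
  set t0 : Fin n := ⟨0, t0lt⟩ with ht0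
  have ht0v : (t0:ℕ) = 0 := rfl
  have hval0 : vec n k r t0 = k + (n-1) := by rw [vec_val, if_pos ht0v]
  rcases Nat.lt_or_ge r 2 with hrsmall | hr2
  · rcases Nat.eq_zero_or_pos r with rfl | hr1
    · -- r = 0, k = a + 2b + 2 ≥ 2
      have hk2 : 2 ≤ k := by omega
      have hsum : ∀ t : Fin n, (if 2 ≤ vec n k 0 t then
            coeff (fsupp n (Function.update (vec n k 0) t (vec n k 0 t - 2))) (Q n a b) else 0)
          = (if t = t0 then coeff (fsupp n (vec n (k-2) 0)) (Q n a b) else 0) := by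
        intro t
        rcases eq_or_ne t t0 with rfl | htne
        · rw [if_pos rfl, if_pos (by rw [hval0]; omega), hval0]
          congr 2
          apply update_vec
          intro xv hxv
          simp only [vec_val, ht0v, Fin.val_mk]
          split_ifs <;> (try contradiction) <;> omega
        · rw [if_neg htne]
          have htv : (t:ℕ) ≠ 0 := fun h => htne (Fin.ext h)
          have hval : vec n k 0 t = n - 1 - (t:ℕ) := by
            rw [vec_val, if_neg htv, if_neg (by omega)]
          by_cases hbig : (t:ℕ) ≤ n - 3
          · rw [if_pos (by rw [hval]; omega), hval]
            have hy : ((t:ℕ)+2) < n := by omega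
            refine coll_helper a b _ t ⟨(t:ℕ)+2, hy⟩ _
              (fin_ne_of_val_ne (by simp only [Fin.val_mk]; omega)) ?_
            simp only [vec_val, Fin.val_mk]
            split_ifs <;> (try contradiction) <;> omega
          · rw [if_neg (by rw [hval]; omega)]
      rw [Finset.sum_congr rfl (fun t _ => hsum t), Finset.sum_ite_eq' Finset.univ t0,
        if_pos (Finset.mem_univ _)]
      rw [H (k-2) 0 (by omega) (by omega) (by omega), cc_zero, cc_zero]
    · -- r = 1, k = a + 2b + 1
      have hrr : r = 1 := by omega
      subst hrr
      have h1lt : (1:ℕ) < n := by omega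
      set s1 : Fin n := ⟨1, h1lt⟩ with hs1
      have hs1v : (s1:ℕ) = 1 := rfl
      have hs10 : t0 ≠ s1 := fin_ne_of_val_ne (by rw [ht0v, hs1v]; omega)
      set T0 : ℤ := if 3 ≤ k then coeff (fsupp n (vec n (k-2) 1)) (Q n a b)
          else if k = 1 then -coeff (fsupp n (vec n 0 0)) (Q n a b) else 0 with hT0
      have hsum : ∀ t : Fin n, (if 2 ≤ vec n k 1 t then
            coeff (fsupp n (Function.update (vec n k 1) t (vec n k 1 t - 2))) (Q n a b) else 0)
          = (if t = t0 then T0 else 0) := by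
        intro t
        rcases eq_or_ne t t0 with rfl | htne
        · rw [if_pos rfl, if_pos (by rw [hval0]; omega), hval0, hT0]
          by_cases hk3 : 3 ≤ k
          · rw [if_pos hk3]
            congr 2
            apply update_vec
            intro xv hxv
            simp only [vec_val, ht0v, Fin.val_mk]
            split_ifs <;> (try contradiction) <;> omega
          · rw [if_neg hk3]
            by_cases hk1 : k = 1
            · rw [if_pos hk1]
              refine swap_helper a b _ (vec n 0 0) t0 s1 _ hs10 ?_ ?_ ?_
              · simp only [vec_val, ht0v, hs1v]
                rw [if_neg (by omega), if_neg (by omega)]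
                omega
              · rw [vec_val, vec_val, hs1v, ht0v, if_neg (by omega), if_pos le_rfl,
                  if_pos rfl]
                omega
              · intro x hx0 hx1
                have hxv0 : (x:ℕ) ≠ 0 := fun h => hx0 (Fin.ext h)
                have hxv1 : (x:ℕ) ≠ 1 := fun h => hx1 (Fin.ext h)
                rw [vec_val, vec_val, if_neg hxv0, if_neg hxv0, if_neg (by omega),
                  if_neg (by omega)]
            · -- k = 2 : collision (0, 1)
              rw [if_neg hk1]
              have hk2 : k = 2 := by omega
              refine coll_helper a b _ t0 s1 _ hs10 ?_
              simp only [vec_val, hs1v]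
              rw [if_neg (by omega), if_pos le_rfl]
              omega
        · rw [if_neg htne]
          have htv : (t:ℕ) ≠ 0 := fun h => htne (Fin.ext h)
          rcases eq_or_ne t s1 with rfl | htne1
          · have hval : vec n k 1 s1 = n - 1 := by
              rw [vec_val, hs1v, if_neg (by omega), if_pos le_rfl]
            by_cases hn3 : 3 ≤ n
            · rw [if_pos (by rw [hval]; omega), hval]
              have hy : (2:ℕ) < n := by omega
              refine coll_helper a b _ s1 ⟨2, hy⟩ _
                (fin_ne_of_val_ne (by rw [hs1v]; simp only [Fin.val_mk]; omega)) ?_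
              simp only [vec_val, Fin.val_mk]
              split_ifs <;> (try contradiction) <;> omega
            · rw [if_neg (by rw [hval]; omega)]
          · have htv1 : (t:ℕ) ≠ 1 := fun h => htne1 (Fin.ext h)
            have hval : vec n k 1 t = n - 1 - (t:ℕ) := by
              rw [vec_val, if_neg htv, if_neg (by omega)]
            by_cases hbig : (t:ℕ) ≤ n - 3
            · rw [if_pos (by rw [hval]; omega), hval]
              have hy : ((t:ℕ)+2) < n := by omega
              refine coll_helper a b _ t ⟨(t:ℕ)+2, hy⟩ _
                (fin_ne_of_val_ne (by simp only [Fin.val_mk]; omega)) ?_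
              simp only [vec_val, Fin.val_mk]
              split_ifs <;> (try contradiction) <;> omega
            · rw [if_neg (by rw [hval]; omega)]
      rw [Finset.sum_congr rfl (fun t _ => hsum t), Finset.sum_ite_eq' Finset.univ t0,
        if_pos (Finset.mem_univ _)]
      by_cases hk3 : 3 ≤ k
      · rw [hT0, if_pos hk3, H (k-2) 1 (by omega) (by omega) (by omega)]
        exact (cc_one_b (show 1 ≤ a + b by omega)).symm
      · by_cases hk1 : k = 1
        · rw [hT0, if_neg hk3, if_pos hk1, H 0 0 (by omega) (by omega) (by omega), cc_zero]
          have ha : a = 0 := by omega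
          have hb : b = 0 := by omega
          subst ha; subst hb
          rw [cc_101]
        · rw [hT0, if_neg hk3, if_neg hk1]
          have ha : a = 1 := by omega
          have hb : b = 0 := by omega
          subst ha; subst hb
          rw [cc_111]
  · -- r ≥ 2 (hence n ≥ 3)
    have hn3 : 3 ≤ n := by omega
    have ht1lt : r - 1 < n := by omega
    have ht2lt : r < n := by omega
    set t1 : Fin n := ⟨r-1, ht1lt⟩ with ht1
    set t2 : Fin n := ⟨r, ht2lt⟩ with ht2
    have ht1v : (t1:ℕ) = r - 1 := rfl
    have ht2v : (t2:ℕ) = r := rfl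
    have ht01 : t0 ≠ t1 := fin_ne_of_val_ne (by rw [ht0v, ht1v]; omega)
    have ht12 : t1 ≠ t2 := fin_ne_of_val_ne (by rw [ht1v, ht2v]; omega)
    set T0 : ℤ := if 3 ≤ k then coeff (fsupp n (vec n (k-2) r)) (Q n a b) else 0 with hT0
    set T1 : ℤ := -coeff (fsupp n (vec n k (r-2))) (Q n a b) with hT1
    have hsum : ∀ t : Fin n, (if 2 ≤ vec n k r t then
          coeff (fsupp n (Function.update (vec n k r) t (vec n k r t - 2))) (Q n a b) else 0)
        = (if t = t0 then T0 else 0) + (if t = t1 then T1 else 0) := by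
      intro t
      rcases eq_or_ne t t0 with rfl | htne0
      · rw [if_pos rfl, if_neg ht01, add_zero, if_pos (by rw [hval0]; omega), hval0, hT0]
        by_cases hk3 : 3 ≤ k
        · rw [if_pos hk3]
          congr 2
          apply update_vec
          intro xv hxv
          simp only [vec_val, ht0v, Fin.val_mk]
          split_ifs <;> (try contradiction) <;> omega
        · rw [if_neg hk3]
          by_cases hk1 : k = 1
          · -- collision (0, 2)
            have hy : (2:ℕ) < n := by omega
            refine coll_helper a b _ t0 ⟨2, hy⟩ _
              (fin_ne_of_val_ne (by rw [ht0v]; simp only [Fin.val_mk]; omega)) ?_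
            simp only [vec_val, Fin.val_mk]
            split_ifs <;> (try contradiction) <;> omega
          · -- k = 2 : collision (0, 1)
            have hy : (1:ℕ) < n := by omega
            refine coll_helper a b _ t0 ⟨1, hy⟩ _
              (fin_ne_of_val_ne (by rw [ht0v]; simp only [Fin.val_mk]; omega)) ?_
            simp only [vec_val, Fin.val_mk]
            split_ifs <;> (try contradiction) <;> omega
      rcases eq_or_ne t t1 with rfl | htne1
      · rw [if_neg htne0, if_pos rfl, zero_add]
        have hval : vec n k r t1 = n - (r-1) := by
          rw [vec_val, ht1v, if_neg (by omega), if_pos (by omega)]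
        rw [if_pos (by rw [hval]; omega), hval, hT1]
        refine swap_helper a b _ (vec n k (r-2)) t1 t2 _ ht12 ?_ ?_ ?_
        · rw [vec_val, ht2v, if_neg (by omega), if_neg (by omega)]
          omega
        · rw [vec_val, vec_val, ht2v, ht1v, if_neg (by omega), if_pos le_rfl,
            if_neg (by omega), if_neg (by omega)]
          omega
        · intro x hx1 hx2
          have hxv1 : (x:ℕ) ≠ r - 1 := fun h => hx1 (Fin.ext h)
          have hxv2 : (x:ℕ) ≠ r := fun h => hx2 (Fin.ext h)
          rw [vec_val, vec_val]
          split_ifs <;> (try contradiction) <;> omega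
      · rw [if_neg htne0, if_neg htne1, add_zero]
        have htv : (t:ℕ) ≠ 0 := fun h => htne0 (Fin.ext h)
        have htv1 : (t:ℕ) ≠ r - 1 := fun h => htne1 (Fin.ext h)
        by_cases hmid : (t:ℕ) ≤ r - 2
        · have hval : vec n k r t = n - (t:ℕ) := by
            rw [vec_val, if_neg htv, if_pos (by omega)]
          rw [if_pos (by rw [hval]; omega), hval]
          have hy : ((t:ℕ)+2) < n := by omega
          refine coll_helper a b _ t ⟨(t:ℕ)+2, hy⟩ _
            (fin_ne_of_val_ne (by simp only [Fin.val_mk]; omega)) ?_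
          simp only [vec_val, Fin.val_mk]
          split_ifs <;> (try contradiction) <;> omega
        rcases eq_or_ne (t:ℕ) r with htr | htnr
        · -- t = r
          have hval : vec n k r t = n - r := by
            rw [vec_val, if_neg htv, if_pos (by omega)]
            omega
          by_cases hrn2 : r ≤ n - 2
          · rw [if_pos (by rw [hval]; omega), hval]
            have hy : ((t:ℕ)+1) < n := by omega
            refine coll_helper a b _ t ⟨(t:ℕ)+1, hy⟩ _
              (fin_ne_of_val_ne (by simp only [Fin.val_mk]; omega)) ?_
            simp only [vec_val, Fin.val_mk]
            split_ifs <;> (try contradiction) <;> omega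
          · rw [if_neg (by rw [hval]; omega)]
        · -- t > r
          have hval : vec n k r t = n - 1 - (t:ℕ) := by
            rw [vec_val, if_neg htv, if_neg (by omega)]
          by_cases hbig : (t:ℕ) ≤ n - 3
          · rw [if_pos (by rw [hval]; omega), hval]
            have hy : ((t:ℕ)+2) < n := by omega
            refine coll_helper a b _ t ⟨(t:ℕ)+2, hy⟩ _
              (fin_ne_of_val_ne (by simp only [Fin.val_mk]; omega)) ?_
            simp only [vec_val, Fin.val_mk]
            split_ifs <;> (try contradiction) <;> omega
          · rw [if_neg (by rw [hval]; omega)]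
    rw [Finset.sum_congr rfl (fun t _ => hsum t), Finset.sum_add_distrib,
      Finset.sum_ite_eq' Finset.univ t0, Finset.sum_ite_eq' Finset.univ t1,
      if_pos (Finset.mem_univ _), if_pos (Finset.mem_univ _)]
    conv_rhs => rw [cc_succ_b hr2 (by omega)]
    by_cases hk3 : 3 ≤ k
    · rw [hT0, if_pos hk3, hT1,
        H (k-2) r (by omega) hr (by omega), H k (r-2) (by omega) (by omega) (by omega)]
      ring
    · rw [hT0, if_neg hk3, hT1, H k (r-2) (by omega) (by omega) (by omega),
        cc_vanish (show 1 ≤ a + b by omega) (show a + 2*b ≤ r by omega)]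
      ring

end ChiHook

namespace ChiHook
variable {n : ℕ}

lemma main (hn : 2 ≤ n) : ∀ b a k r, k + r = a + 2*b → r ≤ n - 1 → (k = 0 → r = 0) →
    coeff (fsupp n (vec n k r)) (Q n a b) = cc r a b := by
  intro b
  induction b with
  | zero =>
    intro a
    induction a with
    | zero =>
      intro k r hc hr hk0
      have hkk : k = 0 := by omega
      have hrr : r = 0 := by omega
      subst hkk; subst hrr
      rw [Q, pow_zero, pow_zero, mul_one, mul_one, coeff_Del_base (by omega), cc_zero]
    | succ a iha =>
      intro k r hc hr hk0
      have hk : 1 ≤ k := by omega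
      have hQ : Q n (a+1) 0 = Q n a 0 * P n 1 := by rw [Q, Q]; ring
      rw [hQ]
      exact stepP1 hn hk hr (by omega) (fun k' r' h hh hx => iha k' r' h hh hx)
  | succ b ihb =>
    intro a k r hc hr hk0
    have hk : 1 ≤ k := by omega
    have hQ : Q n a (b+1) = Q n a b * P n 2 := by rw [Q, Q]; ring
    rw [hQ]
    exact stepP2 hn hk hr (by omega) (fun k' r' h1 h2 h3 => ihb a k' r' h1 h2 h3)

end ChiHook

/-- For the hook `λ = (k, 1^(n-k))` and `0 ≤ i ≤ ⌊n/2⌋`,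
`∑_{j=0}^{i} χ_λ(2^j 1^(n-2j)) C(i,j) = C(n-i-1, k-i-1) 2^i`, the binomial
coefficient being `0` when `k - i - 1 < 0`.  Here `σ j` is any permutation of
cycle type `2^j 1^(n-2j)`. -/
theorem chiPart_hook_binomial_sum {n k : ℕ} (hn : 2 ≤ n) (hk1 : 1 ≤ k) (hkn : k ≤ n)
    (i : ℕ) (hi : i ≤ n / 2)
    (σ : ℕ → Equiv.Perm (Fin n))
    (hσ : ∀ j ≤ i, (σ j).cycleType = Multiset.replicate j 2) :
    ∑ j ∈ Finset.range (i + 1), chiPart n (hookPart n k) (σ j) * (i.choose j : ℤ)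
      = (if i < k then ((n - i - 1).choose (k - i - 1) : ℤ) else 0) * 2 ^ i := by
  have hin : i ≤ n - 1 := by omega
  have h2i : 2 * i ≤ n := by omega
  -- Step 1: identify each character value
  have hstep : ∀ j ∈ Finset.range (i+1), chiPart n (hookPart n k) (σ j) * (i.choose j : ℤ)
      = ChiHook.cc (n-k) (n-2*j) j * (i.choose j : ℤ) := by
    intro j hj
    have hj' : j ≤ i := Nat.lt_succ_iff.1 (Finset.mem_range.1 hj)
    congr 1
    rw [chiPart, hσ j hj']
    have hexp : (Finsupp.equivFunOnFinite.symm fun x : Fin n => hookPart n k x + (n - 1 - (x:ℕ)))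
        = ChiHook.fsupp n (ChiHook.vec n k (n-k)) := by
      rw [ChiHook.fsupp]
      congr 1
      funext x
      simp only [hookPart, ChiHook.vec]
      have := x.isLt
      split_ifs <;> omega
    have hpoly : ((∏ i' : Fin n, ∏ j' ∈ Finset.univ.filter (fun j' => i' < j'),
        (MvPolynomial.X i' - MvPolynomial.X j' : MvPolynomial (Fin n) ℤ)) *
      (((Multiset.replicate j 2).map fun c =>
          ∑ i' : Fin n, (MvPolynomial.X i' : MvPolynomial (Fin n) ℤ) ^ c).prod *
        (∑ i' : Fin n, (MvPolynomial.X i' : MvPolynomial (Fin n) ℤ)) ^ (n - (Multiset.replicate j 2).sum)))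
        = ChiHook.Q n (n-2*j) j := by
      rw [Multiset.map_replicate, Multiset.prod_replicate, Multiset.sum_replicate, smul_eq_mul]
      rw [ChiHook.Q, ChiHook.Del, ChiHook.P, ChiHook.P]
      have hx1 : (∑ i' : Fin n, (MvPolynomial.X i' : MvPolynomial (Fin n) ℤ))
          = ∑ i' : Fin n, (MvPolynomial.X i' : MvPolynomial (Fin n) ℤ) ^ 1 := by
        simp
      rw [hx1, show j * 2 = 2 * j by ring]
      ring
    rw [hexp, hpoly]
    exact ChiHook.main hn j (n - 2*j) k (n-k) (by omega) (by omega) (by omega)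
  rw [Finset.sum_congr rfl hstep]
  -- Step 2: evaluate the binomial-weighted sum of coefficients
  have hterm : ∀ j ∈ Finset.range (i+1), ChiHook.cc (n-k) (n-2*j) j * (i.choose j : ℤ)
      = (((1 + Polynomial.X : Polynomial ℤ)^(n-1-i) *
          ((1 - Polynomial.X)^j * (1 + Polynomial.X)^(i-j) * (i.choose j : Polynomial ℤ))).coeff (n-k)) := by
    intro j hj
    have hj' : j ≤ i := Nat.lt_succ_iff.1 (Finset.mem_range.1 hj)
    rw [ChiHook.cc, ChiHook.cpol]
    rw [show n - 2*j + j - 1 = (n-1-i) + (i-j) by omega]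
    rw [← map_natCast (Polynomial.C : ℤ →+* Polynomial ℤ) (i.choose j)]
    rw [show ((1 + Polynomial.X : Polynomial ℤ)^(n-1-i) *
          ((1 - Polynomial.X)^j * (1 + Polynomial.X)^(i-j) * Polynomial.C ((i.choose j : ℤ))))
        = ((1 - Polynomial.X)^j * (1 + Polynomial.X)^((n-1-i) + (i-j))) * Polynomial.C ((i.choose j : ℤ))
        by rw [pow_add]; ring]
    rw [Polynomial.coeff_mul_C]
  rw [Finset.sum_congr rfl hterm]
  rw [← Polynomial.finset_sum_coeff]
  rw [← Finset.mul_sum]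
  rw [← add_pow (1 - Polynomial.X : Polynomial ℤ) (1 + Polynomial.X) i]
  rw [show (1 - Polynomial.X : Polynomial ℤ) + (1 + Polynomial.X) = 2 by ring]
  rw [show ((2 : Polynomial ℤ)) = Polynomial.C 2 by norm_num]
  rw [← map_pow, mul_comm, Polynomial.coeff_C_mul, Polynomial.coeff_one_add_X_pow]
  rw [mul_comm]
  congr 1
  by_cases hik : i < k
  · rw [if_pos hik]
    have hsymm := Nat.choose_symm (show n - k ≤ n - 1 - i by omega)
    rw [show (n-1-i) - (n-k) = k - i - 1 by omega] at hsymm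
    rw [show n - 1 - i = n - i - 1 by omega] at hsymm ⊢
    rw [← hsymm]
  · rw [if_neg hik]
    rw [Nat.choose_eq_zero_of_lt (by omega)]
    norm_num
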